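/- arXiv:2407.15530 — 2 statements merged into one kernel-verified Lean document; each statement's English description precedes it below -/
import Mathlib

section
/- Under the stated assumptions, the variance of the self-ambiguity part satisfies Var(χ_s(τ,ν)) = L·(μ₄ − 1)·|ψ(τ,ν)|². -/
open MeasureTheory ProbabilityTheory Complex

/-- The cross-ambiguity function between the `n`-th and `m`-th time-shifted pulses:
`ψ_{n,m}(τ,ν) = exp(−2πi·n·ν·T) · ψ(τ + (m−n)·T, ν)`. -/
noncomputable def psiNM (ψ : ℝ × ℝ → ℂ) (T τ ν : ℝ) (n m : ℕ) : ℂ :=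
  Complex.exp (-2 * Real.pi * Complex.I * n * ν * T) * ψ (τ + ((m : ℝ) - n) * T, ν)

/-- The self-ambiguity part `χ_s(τ,ν) = Σ_n |s_n|² ψ_{n,n}(τ,ν)`. -/
noncomputable def chiS {Ω : Type*} (L : ℕ) (ψ : ℝ × ℝ → ℂ) (T τ ν : ℝ)
    (s : Fin L → Ω → ℂ) (ω : Ω) : ℂ :=
  ∑ n : Fin L, (Complex.ofReal (‖s n ω‖)) ^ 2 * psiNM ψ T τ ν n n

/-- The variance `Var(X) = E[|X|²] − |E[X]|²` of a complex random variable. -/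
noncomputable def cVar {Ω : Type*} [MeasureSpace Ω] (X : Ω → ℂ) : ℝ :=
  (∫ ω, (‖X ω‖) ^ 2) - (‖∫ ω, X ω‖) ^ 2

/-- The variance of the self-ambiguity part satisfies
`Var(χ_s(τ,ν)) = L·(μ₄ − 1)·|ψ(τ,ν)|²`. -/
theorem variance_self_ambiguity
    {Ω : Type*} [MeasureSpace Ω] [IsProbabilityMeasure (ℙ : Measure Ω)]
    (L : ℕ) (hL : 1 ≤ L) (T : ℝ) (hT : 0 < T) (τ ν : ℝ)
    (ψ : ℝ × ℝ → ℂ) (s : Fin L → Ω → ℂ) (μ₄ : ℝ) (hμ₄ : 1 ≤ μ₄)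
    (hmeas : ∀ n : Fin L, Measurable (s n))
    (hindep : iIndepFun s ℙ)
    (hE2 : ∀ n : Fin L, ∫ ω, (‖s n ω‖) ^ 2 ∂ℙ = 1)
    (hmom4 : ∀ n : Fin L, Integrable (fun ω => (‖s n ω‖) ^ 4) ℙ)
    (hE4 : ∀ n : Fin L, ∫ ω, (‖s n ω‖) ^ 4 ∂ℙ = μ₄) :
    cVar (chiS L ψ T τ ν s) = L * (μ₄ - 1) * (‖ψ (τ, ν)‖) ^ 2 := by
  classical
  set c : Fin L → ℂ := fun n => psiNM ψ T τ ν n n with hc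
  set a : Fin L → Ω → ℝ := fun n ω => (‖s n ω‖) ^ 2 with ha
  have hc_abs : ∀ n : Fin L, ‖c n‖ = ‖ψ (τ, ν)‖ := by
    intro n
    simp only [hc, psiNM]
    rw [norm_mul, Complex.norm_exp]
    have h0 : (-2 * ↑Real.pi * Complex.I * ↑(n : ℕ) * ↑ν * ↑T).re = 0 := by
      simp [Complex.ext_iff]
    rw [h0]
    simp
  have ha_meas : ∀ n, Measurable (a n) := fun n => ((hmeas n).norm.pow_const 2)
  have ha_nonneg : ∀ n ω, 0 ≤ a n ω := fun n ω => sq_nonneg _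
  have ha_sq : ∀ n, (fun ω => a n ω * a n ω) = fun ω => (‖s n ω‖) ^ 4 := by
    intro n; funext ω; simp only [ha]; ring
  have ha2_int : ∀ n, Integrable (fun ω => a n ω * a n ω) ℙ := by
    intro n; rw [ha_sq n]; exact hmom4 n
  have ha_int : ∀ n, Integrable (a n) ℙ := by
    intro n
    refine Integrable.mono' ((integrable_const (1:ℝ)).add (hmom4 n))
      (ha_meas n).aestronglyMeasurable (Filter.Eventually.of_forall fun ω => ?_)
    rw [Real.norm_of_nonneg (ha_nonneg n ω)]
    simp only [ha, Pi.add_apply]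
    have h0 : (0:ℝ) ≤ ‖s n ω‖ := norm_nonneg _
    nlinarith [sq_nonneg ((‖s n ω‖)^2 - 1)]
  have hindep_a : ∀ n m : Fin L, n ≠ m → IndepFun (a n) (a m) ℙ := by
    intro n m hnm
    exact (hindep.indepFun hnm).comp
      (measurable_norm.pow_const 2) (measurable_norm.pow_const 2)
  have hEa : ∀ n, ∫ ω, a n ω ∂ℙ = 1 := hE2
  have hprod_int : ∀ n m : Fin L, Integrable (fun ω => a n ω * a m ω) ℙ := by
    intro n m
    by_cases h : n = m
    · subst h; exact ha2_int n
    · exact (hindep_a n m h).integrable_mul (ha_int n) (ha_int m)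
  have hEprod : ∀ n m : Fin L, ∫ ω, a n ω * a m ω ∂ℙ =
      if n = m then μ₄ else 1 := by
    intro n m
    by_cases h : n = m
    · subst h; rw [ha_sq n, if_pos rfl]; exact hE4 n
    · rw [if_neg h]
      have h2 := (hindep_a n m h).integral_mul_eq_mul_integral (ha_int n).aestronglyMeasurable
        (ha_int m).aestronglyMeasurable
      rw [hEa n, hEa m, mul_one] at h2
      exact h2
  have hchi : ∀ ω, chiS L ψ T τ ν s ω = ∑ n : Fin L, (a n ω : ℂ) * c n := by
    intro ω
    simp only [chiS, hc, ha]
    congr 1; funext n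
    push_cast; ring_nf
  have hint_term : ∀ n : Fin L, Integrable (fun ω => (a n ω : ℂ) * c n) ℙ :=
    fun n => ((ha_int n).ofReal.mul_const _)
  have hEchi : ∫ ω, chiS L ψ T τ ν s ω ∂ℙ = ∑ n : Fin L, c n := by
    rw [integral_congr_ae (Filter.Eventually.of_forall hchi),
      integral_finset_sum _ (fun n _ => hint_term n)]
    refine Finset.sum_congr rfl fun n _ => ?_
    rw [integral_mul_const, show (∫ ω, ((a n ω : ℂ)) ∂ℙ) = ((∫ ω, a n ω ∂ℙ : ℝ) : ℂ) from
      integral_ofReal, hEa n, Complex.ofReal_one, one_mul]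
  have habs2 : ∀ ω, (‖chiS L ψ T τ ν s ω‖)^2 =
      ∑ n : Fin L, ∑ m : Fin L, a n ω * a m ω * (c n * starRingEnd ℂ (c m)).re := by
    intro ω
    have h1 : ((‖chiS L ψ T τ ν s ω‖)^2 : ℝ)
        = (chiS L ψ T τ ν s ω * starRingEnd ℂ (chiS L ψ T τ ν s ω)).re := by
      rw [Complex.mul_conj]; simp [Complex.sq_norm]
    rw [h1, hchi ω, map_sum, Finset.sum_mul_sum, Complex.re_sum]
    refine Finset.sum_congr rfl fun n _ => ?_
    rw [Complex.re_sum]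
    refine Finset.sum_congr rfl fun m _ => ?_
    rw [map_mul, Complex.conj_ofReal]
    have h2 : (↑(a n ω):ℂ) * c n * ((↑(a m ω):ℂ) * starRingEnd ℂ (c m))
        = ((a n ω * a m ω : ℝ):ℂ) * (c n * starRingEnd ℂ (c m)) := by
      push_cast; ring
    rw [h2, Complex.re_ofReal_mul]
  have hE2chi : ∫ ω, (‖chiS L ψ T τ ν s ω‖)^2 ∂ℙ
      = ∑ n : Fin L, ∑ m : Fin L, (if n = m then μ₄ else 1) * (c n * starRingEnd ℂ (c m)).re := by
    rw [integral_congr_ae (Filter.Eventually.of_forall habs2),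
      integral_finset_sum _ (fun n _ =>
        integrable_finset_sum _ (fun m _ => (hprod_int n m).mul_const _))]
    refine Finset.sum_congr rfl fun n _ => ?_
    rw [integral_finset_sum _ (fun m _ => (hprod_int n m).mul_const _)]
    refine Finset.sum_congr rfl fun m _ => ?_
    rw [integral_mul_const, hEprod n m]
  have hEabs : (‖∫ ω, chiS L ψ T τ ν s ω ∂ℙ‖)^2
      = ∑ n : Fin L, ∑ m : Fin L, (c n * starRingEnd ℂ (c m)).re := by
    rw [hEchi]
    have h1 : ((‖∑ n : Fin L, c n‖)^2 : ℝ)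
        = ((∑ n : Fin L, c n) * starRingEnd ℂ (∑ n : Fin L, c n)).re := by
      rw [Complex.mul_conj]; simp [Complex.sq_norm]
    rw [h1, map_sum, Finset.sum_mul_sum, Complex.re_sum]
    exact Finset.sum_congr rfl fun n _ => Complex.re_sum _ _
  have hdiag : ∀ n : Fin L, (c n * starRingEnd ℂ (c n)).re = (‖ψ (τ, ν)‖)^2 := by
    intro n
    rw [Complex.mul_conj, Complex.ofReal_re, Complex.normSq_eq_norm_sq, hc_abs n]
  unfold cVar
  rw [hE2chi, hEabs, ← Finset.sum_sub_distrib]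
  have hinner : ∀ n : Fin L,
      ((∑ m : Fin L, (if n = m then μ₄ else 1) * (c n * starRingEnd ℂ (c m)).re)
        - ∑ m : Fin L, (c n * starRingEnd ℂ (c m)).re)
      = (μ₄ - 1) * (‖ψ (τ, ν)‖)^2 := by
    intro n
    rw [← Finset.sum_sub_distrib]
    have : ∀ m : Fin L, ((if n = m then μ₄ else 1) * (c n * starRingEnd ℂ (c m)).re
        - (c n * starRingEnd ℂ (c m)).re)
        = if n = m then (μ₄ - 1) * (c n * starRingEnd ℂ (c m)).re else 0 := by
      intro m
      by_cases h : n = m <;> simp [h] <;> ring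
    rw [Finset.sum_congr rfl (fun m _ => this m), Finset.sum_ite_eq]
    simp [hdiag n]
  rw [Finset.sum_congr rfl (fun n _ => hinner n), Finset.sum_const, Finset.card_univ,
    Fintype.card_fin, nsmul_eq_mul]
  ring
end

section
/- Under the stated assumptions, the expected integrated sidelobe level over the region of interest equals the integrated weighted squared pulse ambiguity: E[∬_Θ |χ(τ, ν)|² dτ dν] = Σ_{|n| < L} ∬_Θ α_n(ν) · |ψ(τ + nT, ν)|² dτ dν, where α_0(ν) = L(μ₄ − 1) + |Σ_{m=0}^{L−1} exp(−2πi·m·ν·T)|² and α_n(ν) = L − |n| for 0 < |n| < L. -/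
open MeasureTheory ProbabilityTheory Complex

set_option maxHeartbeats 1000000

section Helpers

lemma inner_count {L : ℕ} (n : Fin L) (k : ℤ) :
    (∑ m : Fin L, if ((m : ℕ) : ℤ) - ((n : ℕ) : ℤ) = k then (1:ℝ) else 0)
      = if 0 ≤ (n:ℤ) + k ∧ (n:ℤ) + k < L then 1 else 0 := by
  by_cases h : 0 ≤ (n:ℤ) + k ∧ (n:ℤ) + k < L
  · rw [if_pos h]
    obtain ⟨h1, h2⟩ := h
    have hlt : ((n:ℤ) + k).toNat < L := by omega
    set m₀ : Fin L := ⟨((n:ℤ) + k).toNat, hlt⟩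
    have key : ∀ m : Fin L, (((m : ℕ) : ℤ) - ((n : ℕ) : ℤ) = k) ↔ m = m₀ := by
      intro m
      constructor
      · intro hm; apply Fin.ext; simp only [m₀]; omega
      · intro hm; subst hm; simp only [m₀]; push_cast; omega
    calc (∑ m : Fin L, if ((m : ℕ) : ℤ) - ((n : ℕ) : ℤ) = k then (1:ℝ) else 0)
        = ∑ m : Fin L, if m = m₀ then (1:ℝ) else 0 := by
          apply Finset.sum_congr rfl; intro m _; rw [if_congr (key m) rfl rfl]
      _ = 1 := by simp
  · rw [if_neg h]
    apply Finset.sum_eq_zero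
    intro m _
    rw [if_neg]
    intro hm
    have := m.isLt
    omega

lemma count_pairs {L : ℕ} {k : ℤ} (hk : -(L:ℤ) < k) (hk' : k < L) :
    (∑ n : Fin L, ∑ m : Fin L, if ((m : ℕ) : ℤ) - ((n : ℕ) : ℤ) = k then (1:ℝ) else 0)
      = (L : ℝ) - |(k : ℝ)| := by
  simp_rw [inner_count]
  rcases le_or_gt 0 k with hk0 | hk0
  · -- condition: n + k < L i.e. n < L - k.toNat
    have e : ∀ n : Fin L, (if 0 ≤ (n:ℤ) + k ∧ (n:ℤ) + k < L then (1:ℝ) else 0)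
        = if (n:ℕ) ∈ Finset.range (L - k.toNat) then 1 else 0 := by
      intro n
      have := n.isLt
      by_cases h : (n:ℕ) < L - k.toNat
      · rw [if_pos, if_pos] <;> simp_all <;> omega
      · rw [if_neg, if_neg] <;> simp_all <;> omega
    simp_rw [e]
    rw [Fin.sum_univ_eq_sum_range (fun i => if i ∈ Finset.range (L - k.toNat) then (1:ℝ) else 0)]
    rw [Finset.sum_ite_mem]
    have hinter : Finset.range L ∩ Finset.range (L - k.toNat) = Finset.range (L - k.toNat) := by
      apply Finset.inter_eq_right.2
      apply Finset.range_subset_range.2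
      omega
    rw [hinter, Finset.sum_const, Finset.card_range, nsmul_eq_mul, mul_one]
    have habs : |(k:ℝ)| = (k.toNat : ℝ) := by
      rw [_root_.abs_of_nonneg (by exact_mod_cast hk0)]
      exact_mod_cast (Int.toNat_of_nonneg hk0).symm
    have hle : k.toNat ≤ L := by omega
    rw [habs, Nat.cast_sub hle]
  · -- k < 0, condition: (-k).toNat ≤ n
    have e : ∀ n : Fin L, (if 0 ≤ (n:ℤ) + k ∧ (n:ℤ) + k < L then (1:ℝ) else 0)
        = if (n:ℕ) ∈ Finset.Ico ((-k).toNat) L then 1 else 0 := by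
      intro n
      have := n.isLt
      by_cases h : (-k).toNat ≤ (n:ℕ)
      · rw [if_pos, if_pos] <;> simp_all <;> omega
      · rw [if_neg, if_neg] <;> simp_all <;> omega
    simp_rw [e]
    rw [Fin.sum_univ_eq_sum_range (fun i => if i ∈ Finset.Ico ((-k).toNat) L then (1:ℝ) else 0)]
    rw [Finset.sum_ite_mem]
    have hinter : Finset.range L ∩ Finset.Ico ((-k).toNat) L = Finset.Ico ((-k).toNat) L := by
      rw [Finset.range_eq_Ico, Finset.Ico_inter_Ico]
      congr 1 <;> omega
    rw [hinter, Finset.sum_const, Nat.card_Ico, nsmul_eq_mul, mul_one]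
    have habs : |(k:ℝ)| = ((-k).toNat : ℝ) := by
      rw [_root_.abs_of_neg (by exact_mod_cast hk0)]
      exact_mod_cast (Int.toNat_of_nonneg (by omega)).symm
    have hle : (-k).toNat ≤ L := by omega
    rw [habs, Nat.cast_sub hle]

lemma sum_shift {L : ℕ} (F : ℤ → ℝ) :
    (∑ n : Fin L, ∑ m : Fin L, F (((m : ℕ) : ℤ) - ((n : ℕ) : ℤ)))
      = ∑ k ∈ Finset.Ioo (-(L:ℤ)) (L:ℤ), ((L : ℝ) - |(k : ℝ)|) * F k := by
  have step1 : ∀ (n m : Fin L), F (((m : ℕ) : ℤ) - ((n : ℕ) : ℤ))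
      = ∑ k ∈ Finset.Ioo (-(L:ℤ)) (L:ℤ),
          (if ((m : ℕ) : ℤ) - ((n : ℕ) : ℤ) = k then (1:ℝ) else 0) * F k := by
    intro n m
    have hmem : (((m : ℕ) : ℤ) - ((n : ℕ) : ℤ)) ∈ Finset.Ioo (-(L:ℤ)) (L:ℤ) := by
      simp only [Finset.mem_Ioo]
      have := m.isLt; have := n.isLt
      omega
    symm
    calc (∑ k ∈ Finset.Ioo (-(L:ℤ)) (L:ℤ),
            (if ((m : ℕ) : ℤ) - ((n : ℕ) : ℤ) = k then (1:ℝ) else 0) * F k)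
        = ∑ k ∈ Finset.Ioo (-(L:ℤ)) (L:ℤ),
            (if ((m : ℕ) : ℤ) - ((n : ℕ) : ℤ) = k then F k else 0) := by
          apply Finset.sum_congr rfl
          intro k _
          split_ifs <;> simp
      _ = F (((m : ℕ) : ℤ) - ((n : ℕ) : ℤ)) := by
          rw [Finset.sum_ite_eq (Finset.Ioo (-(L:ℤ)) (L:ℤ)) _ (fun k => F k), if_pos hmem]
  calc (∑ n : Fin L, ∑ m : Fin L, F (((m : ℕ) : ℤ) - ((n : ℕ) : ℤ)))
      = ∑ n : Fin L, ∑ m : Fin L, ∑ k ∈ Finset.Ioo (-(L:ℤ)) (L:ℤ),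
          (if ((m : ℕ) : ℤ) - ((n : ℕ) : ℤ) = k then (1:ℝ) else 0) * F k := by
        exact Finset.sum_congr rfl fun n _ => Finset.sum_congr rfl fun m _ => step1 n m
    _ = ∑ k ∈ Finset.Ioo (-(L:ℤ)) (L:ℤ), ∑ n : Fin L, ∑ m : Fin L,
          (if ((m : ℕ) : ℤ) - ((n : ℕ) : ℤ) = k then (1:ℝ) else 0) * F k := by
        rw [show (∑ n : Fin L, ∑ m : Fin L, ∑ k ∈ Finset.Ioo (-(L:ℤ)) (L:ℤ),
            (if ((m : ℕ) : ℤ) - ((n : ℕ) : ℤ) = k then (1:ℝ) else 0) * F k)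
          = ∑ n : Fin L, ∑ k ∈ Finset.Ioo (-(L:ℤ)) (L:ℤ), ∑ m : Fin L,
            (if ((m : ℕ) : ℤ) - ((n : ℕ) : ℤ) = k then (1:ℝ) else 0) * F k from
          Finset.sum_congr rfl fun n _ => Finset.sum_comm]
        exact Finset.sum_comm
    _ = ∑ k ∈ Finset.Ioo (-(L:ℤ)) (L:ℤ), ((L : ℝ) - |(k : ℝ)|) * F k := by
        apply Finset.sum_congr rfl
        intro k hk
        simp only [Finset.mem_Ioo] at hk
        calc (∑ n : Fin L, ∑ m : Fin L,
              (if ((m : ℕ) : ℤ) - ((n : ℕ) : ℤ) = k then (1:ℝ) else 0) * F k)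
            = (∑ n : Fin L, (∑ m : Fin L,
                (if ((m : ℕ) : ℤ) - ((n : ℕ) : ℤ) = k then (1:ℝ) else 0)) * F k) :=
              Finset.sum_congr rfl fun n _ => by rw [← Finset.sum_mul]
          _ = (∑ n : Fin L, ∑ m : Fin L,
                (if ((m : ℕ) : ℤ) - ((n : ℕ) : ℤ) = k then (1:ℝ) else 0)) * F k := by
              rw [← Finset.sum_mul]
          _ = ((L : ℝ) - |(k : ℝ)|) * F k := by rw [count_pairs hk.1 hk.2]

/-- the fourth-moment coefficient -/
noncomputable def cval {L : ℕ} (μ₄ : ℝ) (n m n' m' : Fin L) : ℂ :=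
  if n = m ∧ n' = m' then (if n = n' then (μ₄ : ℂ) else 1)
  else if n = n' ∧ m = m' then 1 else 0

lemma sum_ite_eq_univ {ι M : Type*} [Fintype ι] [DecidableEq ι] [AddCommMonoid M]
    (a : ι) (f : ι → M) : (∑ x : ι, if a = x then f x else 0) = f a := by
  rw [Finset.sum_ite_eq Finset.univ a f, if_pos (Finset.mem_univ a)]

lemma quad_sum_eval {L : ℕ} (μ₄ : ℝ) (ψf : Fin L → Fin L → ℂ) :
    (∑ n : Fin L, ∑ m : Fin L, ∑ n' : Fin L, ∑ m' : Fin L,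
        cval μ₄ n m n' m' * (ψf n m * (starRingEnd ℂ) (ψf n' m')))
      = (∑ n : Fin L, ψf n n) * (starRingEnd ℂ) (∑ n : Fin L, ψf n n)
        + (∑ n : Fin L, ∑ m : Fin L, ψf n m * (starRingEnd ℂ) (ψf n m))
        + ((μ₄ : ℂ) - 2) * ∑ n : Fin L, ψf n n * (starRingEnd ℂ) (ψf n n) := by
  set W : Fin L → Fin L → Fin L → Fin L → ℂ :=
    fun n m n' m' => ψf n m * (starRingEnd ℂ) (ψf n' m') with hW
  have decomp : ∀ n m n' m', cval μ₄ n m n' m' * W n m n' m'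
      = (if n = m ∧ n' = m' then W n m n' m' else 0)
        + (if n = n' ∧ m = m' then W n m n' m' else 0)
        + ((μ₄:ℂ) - 2) * (if n = m ∧ n' = m' ∧ n = n' then W n m n' m' else 0) := by
    intro n m n' m'
    unfold cval
    by_cases h1 : n = m ∧ n' = m'
    · by_cases hnn : n = n'
      · have hmm' : m = m' := h1.1.symm.trans (hnn.trans h1.2)
        rw [if_pos h1, if_pos hnn, if_pos h1, if_pos ⟨hnn, hmm'⟩, if_pos ⟨h1.1, h1.2, hnn⟩]
        ring
      · rw [if_pos h1, if_neg hnn, if_pos h1, if_neg (fun h => hnn h.1),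
          if_neg (fun h => hnn h.2.2)]
        ring
    · by_cases h2 : n = n' ∧ m = m'
      · rw [if_neg h1, if_pos h2, if_neg h1, if_pos h2, if_neg (fun h => h1 ⟨h.1, h.2.1⟩)]
        ring
      · rw [if_neg h1, if_neg h2, if_neg h1, if_neg h2, if_neg (fun h => h1 ⟨h.1, h.2.1⟩)]
        ring
  have split : (∑ n : Fin L, ∑ m : Fin L, ∑ n' : Fin L, ∑ m' : Fin L,
      cval μ₄ n m n' m' * W n m n' m')
      = (∑ n : Fin L, ∑ m : Fin L, ∑ n' : Fin L, ∑ m' : Fin L,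
          if n = m ∧ n' = m' then W n m n' m' else 0)
        + (∑ n : Fin L, ∑ m : Fin L, ∑ n' : Fin L, ∑ m' : Fin L,
          if n = n' ∧ m = m' then W n m n' m' else 0)
        + ((μ₄:ℂ) - 2) * (∑ n : Fin L, ∑ m : Fin L, ∑ n' : Fin L, ∑ m' : Fin L,
          if n = m ∧ n' = m' ∧ n = n' then W n m n' m' else 0) := by
    simp_rw [decomp, Finset.sum_add_distrib, Finset.mul_sum]
  rw [split]
  congr 1
  · congr 1
    · -- first sum
      have inner : ∀ n m : Fin L, (∑ n' : Fin L, ∑ m' : Fin L,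
          if n = m ∧ n' = m' then W n m n' m' else 0)
          = if n = m then ∑ n' : Fin L, W n m n' n' else 0 := by
        intro n m
        by_cases hnm : n = m
        · rw [if_pos hnm]
          simp only [hnm, true_and]
          exact Finset.sum_congr rfl fun n' _ => sum_ite_eq_univ n' (fun m' => W m m n' m')
        · rw [if_neg hnm]
          apply Finset.sum_eq_zero; intro n' _
          apply Finset.sum_eq_zero; intro m' _
          rw [if_neg (fun h => hnm h.1)]
      simp_rw [inner]
      have collapse : ∀ n : Fin L, (∑ m : Fin L, if n = m then ∑ n' : Fin L, W n m n' n' else 0)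
          = ∑ n' : Fin L, W n n n' n' :=
        fun n => sum_ite_eq_univ n (fun m => ∑ n' : Fin L, W n m n' n')
      simp_rw [collapse]
      rw [map_sum, Finset.sum_mul_sum]
    · -- second sum
      have inner : ∀ (n m n' : Fin L), (∑ m' : Fin L,
          if n = n' ∧ m = m' then W n m n' m' else 0)
          = if n = n' then W n m n' m else 0 := by
        intro n m n'
        by_cases hnn : n = n'
        · rw [if_pos hnn]
          simp only [hnn, true_and]
          exact sum_ite_eq_univ m (fun m' => W n' m n' m')
        · rw [if_neg hnn]
          apply Finset.sum_eq_zero; intro m' _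
          rw [if_neg (fun h => hnn h.1)]
      simp_rw [inner]
      have collapse : ∀ n m : Fin L, (∑ n' : Fin L, if n = n' then W n m n' m else 0)
          = W n m n m :=
        fun n m => sum_ite_eq_univ n (fun n' => W n m n' m)
      simp_rw [collapse]
      rfl
  · -- third sum
    congr 1
    have inner : ∀ (n m n' : Fin L), (∑ m' : Fin L,
        if n = m ∧ n' = m' ∧ n = n' then W n m n' m' else 0)
        = if n = m ∧ n = n' then W n m n' n' else 0 := by
      intro n m n'
      by_cases h : n = m ∧ n = n'
      · rw [if_pos h]
        have : ∀ m' : Fin L, (if n = m ∧ n' = m' ∧ n = n' then W n m n' m' else 0)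
            = if n' = m' then W n m n' m' else 0 := by
          intro m'
          by_cases hm' : n' = m'
          · rw [if_pos ⟨h.1, hm', h.2⟩, if_pos hm']
          · rw [if_neg (fun hh => hm' hh.2.1), if_neg hm']
        rw [Finset.sum_congr rfl (fun m' _ => this m')]
        exact sum_ite_eq_univ n' (fun m' => W n m n' m')
      · rw [if_neg h]
        apply Finset.sum_eq_zero; intro m' _
        rw [if_neg (fun hh => h ⟨hh.1, hh.2.2⟩)]
    simp_rw [inner]
    have inner2 : ∀ (n m : Fin L), (∑ n' : Fin L, if n = m ∧ n = n' then W n m n' n' else 0)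
        = if n = m then W n m n n else 0 := by
      intro n m
      by_cases hnm : n = m
      · rw [if_pos hnm]
        simp only [hnm, true_and]
        exact sum_ite_eq_univ m (fun n' => W m m n' n')
      · rw [if_neg hnm]
        apply Finset.sum_eq_zero; intro n' _
        rw [if_neg (fun hh => hnm hh.1)]
    simp_rw [inner2]
    have collapse : ∀ n : Fin L, (∑ m : Fin L, if n = m then W n m n n else 0) = W n n n n :=
      fun n => sum_ite_eq_univ n (fun m => W n m n n)
    simp_rw [collapse]
    rfl


section ProbHelpers

variable {Ω : Type*} [MeasureSpace Ω] [IsProbabilityMeasure (ℙ : Measure Ω)]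

lemma cintegral_re {α : Type*} [MeasurableSpace α] {μ : Measure α} {f : α → ℂ}
    (hf : Integrable f μ) : ∫ x, (f x).re ∂μ = (∫ x, f x ∂μ).re := by
  have := integral_re (𝕜 := ℂ) hf
  simpa using this

lemma cintegral_im {α : Type*} [MeasurableSpace α] {μ : Measure α} {f : α → ℂ}
    (hf : Integrable f μ) : ∫ x, (f x).im ∂μ = (∫ x, f x ∂μ).im := by
  have := integral_im (𝕜 := ℂ) hf
  simpa using this

variable {Ω : Type*} [MeasureSpace Ω] [IsProbabilityMeasure (ℙ : Measure Ω)]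

lemma indep_integral_mul_complex {X Y : Ω → ℂ} (h : IndepFun X Y ℙ)
    (hX : Integrable X ℙ) (hY : Integrable Y ℙ) :
    ∫ ω, X ω * Y ω ∂ℙ = (∫ ω, X ω ∂ℙ) * ∫ ω, Y ω ∂ℙ := by
  have hrr : IndepFun (fun ω => (X ω).re) (fun ω => (Y ω).re) ℙ :=
    h.comp Complex.measurable_re Complex.measurable_re
  have hri : IndepFun (fun ω => (X ω).re) (fun ω => (Y ω).im) ℙ :=
    h.comp Complex.measurable_re Complex.measurable_im
  have hir : IndepFun (fun ω => (X ω).im) (fun ω => (Y ω).re) ℙ :=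
    h.comp Complex.measurable_im Complex.measurable_re
  have hii : IndepFun (fun ω => (X ω).im) (fun ω => (Y ω).im) ℙ :=
    h.comp Complex.measurable_im Complex.measurable_im
  have hXY : Integrable (fun ω => X ω * Y ω) ℙ := h.integrable_mul hX hY
  have h1 : ∫ ω, (X ω).re * (Y ω).re ∂ℙ = (∫ ω, (X ω).re ∂ℙ) * ∫ ω, (Y ω).re ∂ℙ :=
    hrr.integral_mul_eq_mul_integral hX.re.aestronglyMeasurable hY.re.aestronglyMeasurable
  have h2 : ∫ ω, (X ω).re * (Y ω).im ∂ℙ = (∫ ω, (X ω).re ∂ℙ) * ∫ ω, (Y ω).im ∂ℙ :=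
    hri.integral_mul_eq_mul_integral hX.re.aestronglyMeasurable hY.im.aestronglyMeasurable
  have h3 : ∫ ω, (X ω).im * (Y ω).re ∂ℙ = (∫ ω, (X ω).im ∂ℙ) * ∫ ω, (Y ω).re ∂ℙ :=
    hir.integral_mul_eq_mul_integral hX.im.aestronglyMeasurable hY.re.aestronglyMeasurable
  have h4 : ∫ ω, (X ω).im * (Y ω).im ∂ℙ = (∫ ω, (X ω).im ∂ℙ) * ∫ ω, (Y ω).im ∂ℙ :=
    hii.integral_mul_eq_mul_integral hX.im.aestronglyMeasurable hY.im.aestronglyMeasurable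
  have i1 : Integrable (fun ω => (X ω).re * (Y ω).re) ℙ := hrr.integrable_mul hX.re hY.re
  have i2 : Integrable (fun ω => (X ω).re * (Y ω).im) ℙ := hri.integrable_mul hX.re hY.im
  have i3 : Integrable (fun ω => (X ω).im * (Y ω).re) ℙ := hir.integrable_mul hX.im hY.re
  have i4 : Integrable (fun ω => (X ω).im * (Y ω).im) ℙ := hii.integrable_mul hX.im hY.im
  apply Complex.ext
  · rw [← cintegral_re hXY]
    simp only [Complex.mul_re]
    rw [integral_sub i1 i4, h1, h4, cintegral_re hX, cintegral_re hY,
      cintegral_im hX, cintegral_im hY]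
  · rw [← cintegral_im hXY]
    simp only [Complex.mul_im]
    rw [integral_add i2 i3, h2, h3, cintegral_re hX, cintegral_re hY,
      cintegral_im hX, cintegral_im hY]

lemma indep_integral_finset_prod {ι : Type*} [DecidableEq ι] {f : ι → Ω → ℂ}
    (hindep : iIndepFun f ℙ) (hmeas : ∀ i, Measurable (f i))
    (hint : ∀ i, Integrable (f i) ℙ) (t : Finset ι) :
    Integrable (fun ω => ∏ i ∈ t, f i ω) ℙ ∧
      (∫ ω, ∏ i ∈ t, f i ω ∂ℙ = ∏ i ∈ t, ∫ ω, f i ω ∂ℙ) := by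
  classical
  induction t using Finset.induction_on with
  | empty => simp
  | insert j t hi ih =>
    have hind : IndepFun (∏ k ∈ t, f k) (f j) ℙ :=
      hindep.indepFun_finset_prod_of_notMem hmeas hi
    have hprod : Integrable (fun ω => ∏ i ∈ t, f i ω) ℙ := ih.1
    have hprod' : Integrable (∏ i ∈ t, f i) ℙ := by
      have : (∏ i ∈ t, f i) = fun ω => ∏ i ∈ t, f i ω := by
        ext ω; simp
      rwa [this]
    have hmul : Integrable (fun ω => (∏ i ∈ t, f i ω) * f j ω) ℙ := by
      have := hind.integrable_mul hprod' (hint j)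
      have e : ((∏ i ∈ t, f i) * f j) = fun ω => (∏ i ∈ t, f i ω) * f j ω := by
        ext ω; simp
      rwa [e] at this
    constructor
    · simp only [Finset.prod_insert hi]
      have e : (fun ω => f j ω * ∏ i ∈ t, f i ω) = fun ω => (∏ i ∈ t, f i ω) * f j ω := by
        ext ω; ring
      rw [e]; exact hmul
    · simp only [Finset.prod_insert hi]
      have e : ∀ ω, f j ω * ∏ i ∈ t, f i ω = (∏ i ∈ t, f i ω) * f j ω := fun ω => by ring
      rw [integral_congr_ae (Filter.Eventually.of_forall e)]
      have h1 : ∫ ω, (∏ i ∈ t, f i ω) * f j ω ∂ℙ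
          = (∫ ω, ∏ i ∈ t, f i ω ∂ℙ) * ∫ ω, f j ω ∂ℙ := by
        have := indep_integral_mul_complex (X := ∏ i ∈ t, f i) (Y := f j) hind hprod' (hint j)
        simpa using this
      rw [h1, ih.2]; ring

/-- the elementary monomial -/
noncomputable def mono (a b : ℕ) (z : ℂ) : ℂ := z ^ a * (starRingEnd ℂ z) ^ b

lemma mono_measurable (a b : ℕ) : Measurable (mono a b) := by
  unfold mono
  exact (measurable_id.pow_const a).mul ((Complex.continuous_conj.measurable).pow_const b)

lemma abs_mono (a b : ℕ) (z : ℂ) : ‖mono a b z‖ = ‖z‖ ^ (a + b) := by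
  simp [mono, map_mul, map_pow, pow_add]

lemma mono_integrable {s : Ω → ℂ} (hm : Measurable s)
    (h4 : Integrable (fun ω => (‖s ω‖) ^ 4) ℙ) {a b : ℕ} (hab : a + b ≤ 4) :
    Integrable (fun ω => mono a b (s ω)) ℙ := by
  have hbound : ∀ ω, ‖mono a b (s ω)‖ ≤ (1:ℝ) + (‖s ω‖) ^ 4 := by
    intro ω
    have h0 : (0:ℝ) ≤ ‖s ω‖ := norm_nonneg _
    have h1 : ‖mono a b (s ω)‖ = ‖s ω‖ ^ (a + b) := by
      rw [abs_mono]
    rw [h1]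
    rcases le_or_gt (‖s ω‖) 1 with h | h
    · calc ‖s ω‖ ^ (a+b) ≤ 1 ^ (a+b) := pow_le_pow_left₀ h0 h _
        _ = 1 := one_pow _
        _ ≤ 1 + ‖s ω‖ ^ 4 := by nlinarith [pow_nonneg h0 4]
    · calc ‖s ω‖ ^ (a+b) ≤ ‖s ω‖ ^ 4 :=
          pow_le_pow_right₀ h.le hab
        _ ≤ 1 + ‖s ω‖ ^ 4 := by linarith
  refine Integrable.mono' ((integrable_const (1:ℝ)).add h4)
    ((mono_measurable a b).comp hm).aestronglyMeasurable
    (Filter.Eventually.of_forall ?_)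
  intro ω
  simpa using hbound ω

section moments

variable {s : Ω → ℂ} (hm : Measurable s)
  (hmean : ∫ ω, s ω ∂ℙ = 0) (hpseudo : ∫ ω, (s ω) ^ 2 ∂ℙ = 0)
  (hE2 : ∫ ω, (‖s ω‖) ^ 2 ∂ℙ = 1)
  (hE4 : ∫ ω, (‖s ω‖) ^ 4 ∂ℙ = (μ₄ : ℝ))

lemma mono_int_00 : ∫ ω, mono 0 0 (s ω) ∂ℙ = 1 := by simp [mono]

lemma mono_int_10 (hmean : ∫ ω, s ω ∂ℙ = 0) : ∫ ω, mono 1 0 (s ω) ∂ℙ = 0 := by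
  simpa [mono] using hmean

lemma mono_int_01 (hmean : ∫ ω, s ω ∂ℙ = 0) : ∫ ω, mono 0 1 (s ω) ∂ℙ = 0 := by
  have : ∫ ω, mono 0 1 (s ω) ∂ℙ = (starRingEnd ℂ) (∫ ω, s ω ∂ℙ) := by
    rw [← integral_conj]; simp [mono]
  rw [this, hmean]; simp

lemma mono_int_20 (hpseudo : ∫ ω, (s ω) ^ 2 ∂ℙ = 0) : ∫ ω, mono 2 0 (s ω) ∂ℙ = 0 := by
  simpa [mono] using hpseudo

lemma mono_int_02 (hpseudo : ∫ ω, (s ω) ^ 2 ∂ℙ = 0) : ∫ ω, mono 0 2 (s ω) ∂ℙ = 0 := by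
  have : ∫ ω, mono 0 2 (s ω) ∂ℙ = (starRingEnd ℂ) (∫ ω, (s ω) ^ 2 ∂ℙ) := by
    rw [← integral_conj]; simp [mono]
  rw [this, hpseudo]; simp

lemma mono_int_11 (hE2 : ∫ ω, (‖s ω‖) ^ 2 ∂ℙ = 1) :
    ∫ ω, mono 1 1 (s ω) ∂ℙ = 1 := by
  have e : ∀ z : ℂ, mono 1 1 z = ((‖z‖ ^ 2 : ℝ) : ℂ) := by
    intro z
    simp [mono, Complex.mul_conj, Complex.normSq_eq_norm_sq]
  calc ∫ ω, mono 1 1 (s ω) ∂ℙ = ∫ ω, ((‖s ω‖ ^ 2 : ℝ) : ℂ) ∂ℙ := by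
        simp_rw [e]
    _ = ((∫ ω, (‖s ω‖) ^ 2 ∂ℙ : ℝ) : ℂ) := integral_ofReal
    _ = 1 := by rw [hE2]; simp

lemma mono_int_22 {μ₄ : ℝ} (hE4 : ∫ ω, (‖s ω‖) ^ 4 ∂ℙ = μ₄) :
    ∫ ω, mono 2 2 (s ω) ∂ℙ = (μ₄ : ℂ) := by
  have e : ∀ z : ℂ, mono 2 2 z = ((‖z‖ ^ 4 : ℝ) : ℂ) := by
    intro z
    have : z ^ 2 * (starRingEnd ℂ z) ^ 2 = (z * starRingEnd ℂ z) ^ 2 := by ring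
    rw [mono, this, Complex.mul_conj, Complex.normSq_eq_norm_sq]
    push_cast
    ring
  calc ∫ ω, mono 2 2 (s ω) ∂ℙ = ∫ ω, ((‖s ω‖ ^ 4 : ℝ) : ℂ) ∂ℙ := by
        simp_rw [e]
    _ = ((∫ ω, (‖s ω‖) ^ 4 ∂ℙ : ℝ) : ℂ) := integral_ofReal
    _ = (μ₄ : ℂ) := by rw [hE4]

end moments

end ProbHelpers

end Helpers

section Quad

variable {Ω : Type*} [MeasureSpace Ω] [IsProbabilityMeasure (ℙ : Measure Ω)]

-- helper products
lemma prod_single {ι M : Type*} [Fintype ι] [DecidableEq ι] [CommMonoid M]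
    (x : ι) (g : ι → M) : (∏ i : ι, if i = x then g i else 1) = g x := by
  rw [Finset.prod_ite_eq' Finset.univ x g]
  simp

lemma prod_pair {ι M : Type*} [Fintype ι] [DecidableEq ι] [CommMonoid M]
    {x y : ι} (hxy : x ≠ y) (g h : ι → M) :
    (∏ i : ι, if i = x then g i else if i = y then h i else 1) = g x * h y := by
  have e : ∀ i : ι, (if i = x then g i else if i = y then h i else 1)
      = (if i = x then g i else 1) * (if i = y then h i else 1) := by
    intro i
    by_cases h1 : i = x
    · subst h1
      rw [if_pos rfl, if_pos rfl, if_neg hxy, mul_one]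
    · rw [if_neg h1, if_neg h1, one_mul]
  rw [Finset.prod_congr rfl (fun i _ => e i), Finset.prod_mul_distrib,
    prod_single x g, prod_single y h]

/-- exponent pattern -/
def aexp {L : ℕ} (n m' : Fin L) (i : Fin L) : ℕ :=
  (if i = n then 1 else 0) + (if i = m' then 1 else 0)


variable {L : ℕ} {s : Fin L → Ω → ℂ} {μ₄ : ℝ}

lemma quad_rw (n m n' m' : Fin L) (ω : Ω) :
    s n ω * (starRingEnd ℂ) (s m ω) * (starRingEnd ℂ) (s n' ω) * s m' ω
      = ∏ i : Fin L, mono (aexp n m' i) (aexp m n' i) (s i ω) := by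
  unfold mono aexp
  have e : ∀ i : Fin L,
      (s i ω) ^ ((if i = n then 1 else 0) + (if i = m' then 1 else 0)) *
        ((starRingEnd ℂ) (s i ω)) ^ ((if i = m then 1 else 0) + (if i = n' then 1 else 0))
      = ((if i = n then s i ω else 1) * (if i = m' then s i ω else 1)) *
        ((if i = m then (starRingEnd ℂ) (s i ω) else 1) *
          (if i = n' then (starRingEnd ℂ) (s i ω) else 1)) := by
    intro i
    rw [pow_add, pow_add]
    congr 1 <;> congr 1 <;> split_ifs <;> simp
  rw [Finset.prod_congr rfl (fun i _ => e i)]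
  rw [Finset.prod_mul_distrib, Finset.prod_mul_distrib, Finset.prod_mul_distrib]
  rw [prod_single n (fun i => s i ω), prod_single m' (fun i => s i ω),
    prod_single m (fun i => (starRingEnd ℂ) (s i ω)),
    prod_single n' (fun i => (starRingEnd ℂ) (s i ω))]
  ring

lemma quad_indep (hmeas : ∀ i, Measurable (s i))
    (hindep : iIndepFun s ℙ) (a b : Fin L → ℕ) :
    iIndepFun (fun i ω => mono (a i) (b i) (s i ω)) ℙ :=
  hindep.comp (fun i => mono (a i) (b i)) (fun i => mono_measurable _ _)

lemma aexp_le {L : ℕ} (n m' : Fin L) (i : Fin L) : aexp n m' i ≤ 2 := by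
  unfold aexp; split_ifs <;> simp

lemma quad_int_parts (hmeas : ∀ i, Measurable (s i))
    (hindep : iIndepFun s ℙ)
    (hmom4 : ∀ i, Integrable (fun ω => (‖s i ω‖) ^ 4) ℙ)
    (a b : Fin L → ℕ) (ha : ∀ i, a i ≤ 2) (hb : ∀ i, b i ≤ 2) :
    Integrable (fun ω => ∏ i : Fin L, mono (a i) (b i) (s i ω)) ℙ ∧
      (∫ ω, ∏ i : Fin L, mono (a i) (b i) (s i ω) ∂ℙ
        = ∏ i : Fin L, ∫ ω, mono (a i) (b i) (s i ω) ∂ℙ) :=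
  indep_integral_finset_prod (quad_indep hmeas hindep a b)
    (fun i => (mono_measurable _ _).comp (hmeas i))
    (fun i => mono_integrable (hmeas i) (hmom4 i) (by have := ha i; have := hb i; omega))
    Finset.univ

lemma quad_integrable (hmeas : ∀ i, Measurable (s i))
    (hindep : iIndepFun s ℙ)
    (hmom4 : ∀ i, Integrable (fun ω => (‖s i ω‖) ^ 4) ℙ)
    (n m n' m' : Fin L) :
    Integrable (fun ω =>
      s n ω * (starRingEnd ℂ) (s m ω) * (starRingEnd ℂ) (s n' ω) * s m' ω) ℙ := by
  have := (quad_int_parts hmeas hindep hmom4 (aexp n m') (aexp m n')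
    (aexp_le n m') (aexp_le m n')).1
  simp_rw [← quad_rw] at this
  exact this

lemma quad_integral_eq (hmeas : ∀ i, Measurable (s i))
    (hindep : iIndepFun s ℙ)
    (hmean : ∀ i, ∫ ω, s i ω ∂ℙ = 0)
    (hpseudo : ∀ i, ∫ ω, (s i ω) ^ 2 ∂ℙ = 0)
    (hE2 : ∀ i, ∫ ω, (‖s i ω‖) ^ 2 ∂ℙ = 1)
    (hmom4 : ∀ i, Integrable (fun ω => (‖s i ω‖) ^ 4) ℙ)
    (hE4 : ∀ i, ∫ ω, (‖s i ω‖) ^ 4 ∂ℙ = μ₄)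
    (n m n' m' : Fin L) :
    ∫ ω, s n ω * (starRingEnd ℂ) (s m ω) * (starRingEnd ℂ) (s n' ω) * s m' ω ∂ℙ
      = cval μ₄ n m n' m' := by
  have hsum : ∫ ω, s n ω * (starRingEnd ℂ) (s m ω) * (starRingEnd ℂ) (s n' ω) * s m' ω ∂ℙ
      = ∏ i : Fin L, ∫ ω, mono (aexp n m' i) (aexp m n' i) (s i ω) ∂ℙ := by
    rw [← (quad_int_parts hmeas hindep hmom4 (aexp n m') (aexp m n')
      (aexp_le n m') (aexp_le m n')).2]
    exact integral_congr_ae (Filter.Eventually.of_forall (fun ω => quad_rw n m n' m' ω))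
  rw [hsum]
  set M : Fin L → ℕ → ℕ → ℂ := fun i a b => ∫ ω, mono a b (s i ω) ∂ℙ with hM
  -- value table
  have M00 : ∀ i, M i 0 0 = 1 := fun i => mono_int_00
  have M10 : ∀ i, M i 1 0 = 0 := fun i => mono_int_10 (hmean i)
  have M01 : ∀ i, M i 0 1 = 0 := fun i => mono_int_01 (hmean i)
  have M20 : ∀ i, M i 2 0 = 0 := fun i => mono_int_20 (hpseudo i)
  have M02 : ∀ i, M i 0 2 = 0 := fun i => mono_int_02 (hpseudo i)
  have M11 : ∀ i, M i 1 1 = 1 := fun i => mono_int_11 (hE2 i)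
  have M22 : ∀ i, M i 2 2 = (μ₄ : ℂ) := fun i => mono_int_22 (hE4 i)
  unfold cval
  by_cases h1 : n = m ∧ n' = m'
  · obtain ⟨rfl, rfl⟩ : n = m ∧ n' = m' := h1
    rw [if_pos ⟨rfl, rfl⟩]
    by_cases h2 : n = n'
    · subst h2
      rw [if_pos rfl]
      have e : ∀ i : Fin L, M i (aexp n n i) (aexp n n i)
          = if i = n then M i 2 2 else 1 := by
        intro i
        by_cases hin : i = n
        · subst hin
          simp [aexp]
        · simp [aexp, hin, M00 i]
      calc ∏ i : Fin L, M i (aexp n n i) (aexp n n i)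
          = ∏ i : Fin L, (if i = n then M i 2 2 else 1) :=
            Finset.prod_congr rfl (fun i _ => e i)
        _ = M n 2 2 := prod_single n _
        _ = (μ₄ : ℂ) := M22 n
    · rw [if_neg h2]
      have e : ∀ i : Fin L, M i (aexp n n' i) (aexp n n' i)
          = if i = n then M i 1 1 else if i = n' then M i 1 1 else 1 := by
        intro i
        by_cases hin : i = n
        · subst hin
          simp [aexp, h2]
        · by_cases hin' : i = n'
          · subst hin'
            simp [aexp, hin]
          · simp [aexp, hin, hin', M00 i]
      calc ∏ i : Fin L, M i (aexp n n' i) (aexp n n' i)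
          = ∏ i : Fin L, (if i = n then M i 1 1 else if i = n' then M i 1 1 else 1) :=
            Finset.prod_congr rfl (fun i _ => e i)
        _ = M n 1 1 * M n' 1 1 := prod_pair h2 _ _
        _ = 1 := by rw [M11 n, M11 n', one_mul]
  · rw [if_neg h1]
    by_cases h2 : n = n' ∧ m = m'
    · obtain ⟨rfl, rfl⟩ := h2
      rw [if_pos ⟨rfl, rfl⟩]
      have hnm : n ≠ m := by
        intro h; exact h1 ⟨h, h⟩
      have e : ∀ i : Fin L, M i (aexp n m i) (aexp m n i)
          = if i = n then M i 1 1 else if i = m then M i 1 1 else 1 := by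
        intro i
        by_cases hin : i = n
        · subst hin
          simp [aexp, hnm]
        · by_cases him : i = m
          · subst him
            simp [aexp, hin]
          · simp [aexp, hin, him, M00 i]
      calc ∏ i : Fin L, M i (aexp n m i) (aexp m n i)
          = ∏ i : Fin L, (if i = n then M i 1 1 else if i = m then M i 1 1 else 1) :=
            Finset.prod_congr rfl (fun i _ => e i)
        _ = M n 1 1 * M m 1 1 := prod_pair hnm _ _
        _ = 1 := by rw [M11 n, M11 m, one_mul]
    · rw [if_neg h2]
      -- find a zero factor
      suffices hz : ∃ j : Fin L, M j (aexp n m' j) (aexp m n' j) = 0 by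
        obtain ⟨j, hj⟩ := hz
        exact Finset.prod_eq_zero (Finset.mem_univ j) hj
      by_cases hnm : n = m
      · -- n = m, so n' ≠ m'
        subst hnm
        have hn'm' : n' ≠ m' := fun h => h1 ⟨rfl, h⟩
        by_cases hn'n : n' = n
        · -- j = m' : a = 1, b = 0
          subst hn'n
          have hm'n : m' ≠ n' := fun h => hn'm' h.symm
          refine ⟨m', ?_⟩
          have ha : aexp n' m' m' = 1 := by simp [aexp, hm'n]
          have hb : aexp n' n' m' = 0 := by simp [aexp, hm'n]
          rw [ha, hb]; exact M10 m'
        · -- j = n' : a = 0, b = 1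
          refine ⟨n', ?_⟩
          have ha : aexp n m' n' = 0 := by simp [aexp, hn'n, hn'm']
          have hb : aexp n n' n' = 1 := by simp [aexp, hn'n]
          rw [ha, hb]; exact M01 n'
      · -- n ≠ m
        by_cases hnm' : n = m'
        · subst hnm'
          by_cases hnn' : n = n'
          · -- j = m : a = 0, b = 1
            refine ⟨m, ?_⟩
            have hmn : m ≠ n := fun h => hnm h.symm
            have hmn' : m ≠ n' := fun h => hnm (h.trans hnn'.symm).symm
            have ha : aexp n n m = 0 := by simp [aexp, hmn]
            have hb : aexp m n' m = 1 := by simp [aexp, hmn']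
            rw [ha, hb]; exact M01 m
          · -- j = n : a = 2, b = 0
            refine ⟨n, ?_⟩
            have ha : aexp n n n = 2 := by simp [aexp]
            have hb : aexp m n' n = 0 := by
              have h1' : n ≠ m := hnm
              simp [aexp, h1', hnn']
            rw [ha, hb]; exact M20 n
        · by_cases hnn' : n = n'
          · -- j = m : a = 0, b = 1   (m ≠ m' since ¬(n=n' ∧ m=m'))
            subst hnn'
            have hmm' : m ≠ m' := fun h => h2 ⟨rfl, h⟩
            refine ⟨m, ?_⟩
            have hmn : m ≠ n := fun h => hnm h.symm
            have ha : aexp n m' m = 0 := by simp [aexp, hmn, hmm']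
            have hb : aexp m n m = 1 := by simp [aexp, hmn]
            rw [ha, hb]; exact M01 m
          · -- j = n : a = 1, b = 0
            refine ⟨n, ?_⟩
            have ha : aexp n m' n = 1 := by simp [aexp, hnm']
            have hb : aexp m n' n = 0 := by simp [aexp, hnm, hnn']
            rw [ha, hb]; exact M10 n


end Quad

/-- The ambiguity function of the frame signal:
`χ(τ,ν) = Σ_n Σ_m s_n conj(s_m) ψ_{n,m}(τ,ν)`. -/
noncomputable def chi {Ω : Type*} (L : ℕ) (ψ : ℝ × ℝ → ℂ) (T τ ν : ℝ)
    (s : Fin L → Ω → ℂ) (ω : Ω) : ℂ :=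
  ∑ n : Fin L, ∑ m : Fin L, s n ω * (starRingEnd ℂ) (s m ω) * psiNM ψ T τ ν n m

/-- The weighting coefficients: `α_0(ν) = L(μ₄ − 1) + |Σ_{m<L} exp(−2πi·m·ν·T)|²` and
`α_n(ν) = L − |n|` for `n ≠ 0`. -/
noncomputable def alphaCoef (L : ℕ) (μ₄ T ν : ℝ) (n : ℤ) : ℝ :=
  if n = 0 then
    L * (μ₄ - 1) +
      ‖∑ m : Fin L, Complex.exp (-2 * Real.pi * Complex.I * (m : ℕ) * ν * T)‖ ^ 2
  else (L : ℝ) - |(n : ℝ)|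


section Master

variable {Ω : Type*} [MeasureSpace Ω] [IsProbabilityMeasure (ℙ : Measure Ω)]

lemma abs_exp_unit (x : ℝ) (n : ℕ) (ν T : ℝ) :
    ‖Complex.exp (-2 * Real.pi * Complex.I * n * ν * T)‖ = 1 := by
  have e : (-2 * (Real.pi:ℂ) * Complex.I * n * ν * T)
      = ((-2 * Real.pi * n * ν * T : ℝ) : ℂ) * Complex.I := by
    push_cast; ring
  rw [e, Complex.norm_exp_ofReal_mul_I]

lemma quad_swap {M : Type*} [AddCommMonoid M] {L : ℕ}
    (g : Fin L → Fin L → Fin L → Fin L → M) :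
    (∑ n : Fin L, ∑ m : Fin L, ∑ n' : Fin L, ∑ m' : Fin L, g n m n' m')
      = ∑ n : Fin L, ∑ m : Fin L, ∑ n' : Fin L, ∑ m' : Fin L, g n' m' n m := by
  have h1 : ∀ (g : Fin L → Fin L → Fin L → Fin L → M),
      (∑ n : Fin L, ∑ m : Fin L, ∑ n' : Fin L, ∑ m' : Fin L, g n m n' m')
      = ∑ p : Fin L × Fin L, ∑ p' : Fin L × Fin L, g p.1 p.2 p'.1 p'.2 := by
    intro g
    rw [Fintype.sum_prod_type]
    apply Finset.sum_congr rfl; intro n _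
    exact Finset.sum_congr rfl fun m _ => by rw [Fintype.sum_prod_type]
  rw [h1 g, h1 (fun n m n' m' => g n' m' n m)]
  exact Finset.sum_comm

lemma master_pointwise
    {L : ℕ} (hL : 1 ≤ L) (T : ℝ)
    (ψ : ℝ × ℝ → ℂ)
    (s : Fin L → Ω → ℂ) (μ₄ : ℝ)
    (hmeas : ∀ n : Fin L, Measurable (s n))
    (hindep : iIndepFun s ℙ)
    (hmean : ∀ n : Fin L, ∫ ω, s n ω ∂ℙ = 0)
    (hpseudo : ∀ n : Fin L, ∫ ω, (s n ω) ^ 2 ∂ℙ = 0)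
    (hE2 : ∀ n : Fin L, ∫ ω, (‖s n ω‖) ^ 2 ∂ℙ = 1)
    (hmom4 : ∀ n : Fin L, Integrable (fun ω => (‖s n ω‖) ^ 4) ℙ)
    (hE4 : ∀ n : Fin L, ∫ ω, (‖s n ω‖) ^ 4 ∂ℙ = μ₄)
    (τ ν : ℝ) :
    ∫ ω, (‖∑ n : Fin L, ∑ m : Fin L,
        s n ω * (starRingEnd ℂ) (s m ω) * psiNM ψ T τ ν n m‖) ^ 2 ∂ℙ
      = ∑ k ∈ Finset.Ioo (-(L:ℤ)) (L:ℤ),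
          alphaCoef L μ₄ T ν k * (‖ψ (τ + (k:ℝ) * T, ν)‖) ^ 2 := by
  classical
  set ψf : Fin L → Fin L → ℂ := fun n m => psiNM ψ T τ ν n m with hψf
  set X : Ω → ℂ := fun ω => ∑ n : Fin L, ∑ m : Fin L,
    s n ω * (starRingEnd ℂ) (s m ω) * ψf n m with hX
  set coef : Fin L → Fin L → Fin L → Fin L → ℂ :=
    fun n m n' m' => ψf n m * (starRingEnd ℂ) (ψf n' m') with hcoef
  set q : Fin L → Fin L → Fin L → Fin L → Ω → ℂ :=
    fun n m n' m' ω => s n ω * (starRingEnd ℂ) (s m ω) * (starRingEnd ℂ) (s n' ω) * s m' ω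
    with hq
  -- expansion of |X|^2
  have hexpand : ∀ ω, X ω * (starRingEnd ℂ) (X ω)
      = ∑ n : Fin L, ∑ m : Fin L, ∑ n' : Fin L, ∑ m' : Fin L,
          q n m n' m' ω * coef n m n' m' := by
    intro ω
    have step : X ω * (starRingEnd ℂ) (X ω)
        = ∑ n : Fin L, ∑ m : Fin L, ∑ n' : Fin L, ∑ m' : Fin L,
            q n' m' n m ω * coef n' m' n m := by
      rw [hX]
      simp only [map_sum, Finset.sum_mul, Finset.mul_sum]
      apply Finset.sum_congr rfl; intro n _
      apply Finset.sum_congr rfl; intro m _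
      apply Finset.sum_congr rfl; intro n' _
      apply Finset.sum_congr rfl; intro m' _
      simp only [map_mul, Complex.conj_conj, hq, hcoef]
      ring
    rw [step, quad_swap (fun n m n' m' => q n' m' n m ω * coef n' m' n m)]
  have Iq : ∀ (n m n' m' : Fin L), Integrable (q n m n' m') ℙ :=
    fun n m n' m' => quad_integrable hmeas hindep hmom4 n m n' m'
  have Iterm : ∀ (n m n' m' : Fin L),
      Integrable (fun ω => q n m n' m' ω * coef n m n' m') ℙ :=
    fun n m n' m' => (Iq n m n' m').mul_const _
  have hterm : ∀ (n m n' m' : Fin L),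
      ∫ ω, q n m n' m' ω * coef n m n' m' ∂ℙ = cval μ₄ n m n' m' * coef n m n' m' := by
    intro n m n' m'
    have e : ∀ ω, q n m n' m' ω * coef n m n' m' = q n m n' m' ω • coef n m n' m' :=
      fun ω => rfl
    rw [integral_congr_ae (Filter.Eventually.of_forall e), integral_smul_const,
      quad_integral_eq hmeas hindep hmean hpseudo hE2 hmom4 hE4 n m n' m', smul_eq_mul]
  -- the total integral of X * conj X
  have hXconj_int : Integrable (fun ω => X ω * (starRingEnd ℂ) (X ω)) ℙ := by
    apply Integrable.congr (f := fun ω => ∑ n : Fin L, ∑ m : Fin L, ∑ n' : Fin L, ∑ m' : Fin L,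
      q n m n' m' ω * coef n m n' m')
    · apply integrable_finset_sum _ (fun n _ => ?_)
      apply integrable_finset_sum _ (fun m _ => ?_)
      apply integrable_finset_sum _ (fun n' _ => ?_)
      exact integrable_finset_sum _ (fun m' _ => Iterm n m n' m')
    · exact Filter.Eventually.of_forall (fun ω => (hexpand ω).symm)
  have hSval : ∫ ω, X ω * (starRingEnd ℂ) (X ω) ∂ℙ
      = ∑ n : Fin L, ∑ m : Fin L, ∑ n' : Fin L, ∑ m' : Fin L,
          cval μ₄ n m n' m' * coef n m n' m' := by
    rw [integral_congr_ae (Filter.Eventually.of_forall hexpand)]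
    rw [integral_finset_sum _ (fun n _ => integrable_finset_sum _ (fun m _ =>
      integrable_finset_sum _ (fun n' _ => integrable_finset_sum _
        (fun m' _ => Iterm n m n' m'))))]
    apply Finset.sum_congr rfl; intro n _
    rw [integral_finset_sum _ (fun m _ => integrable_finset_sum _ (fun n' _ =>
      integrable_finset_sum _ (fun m' _ => Iterm n m n' m')))]
    apply Finset.sum_congr rfl; intro m _
    rw [integral_finset_sum _ (fun n' _ => integrable_finset_sum _
      (fun m' _ => Iterm n m n' m'))]
    apply Finset.sum_congr rfl; intro n' _
    rw [integral_finset_sum _ (fun m' _ => Iterm n m n' m')]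
    exact Finset.sum_congr rfl (fun m' _ => hterm n m n' m')
  -- reduce |X|^2 to the real part
  have habs2 : ∀ ω, (‖X ω‖) ^ 2 = (X ω * (starRingEnd ℂ) (X ω)).re := by
    intro ω
    rw [Complex.mul_conj, Complex.normSq_eq_norm_sq, Complex.ofReal_re]
  have hLHS : ∫ ω, (‖X ω‖) ^ 2 ∂ℙ
      = (∑ n : Fin L, ∑ m : Fin L, ∑ n' : Fin L, ∑ m' : Fin L,
          cval μ₄ n m n' m' * coef n m n' m').re := by
    rw [← hSval, ← cintegral_re hXconj_int]
    exact integral_congr_ae (Filter.Eventually.of_forall habs2)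
  rw [hLHS, quad_sum_eval μ₄ ψf]
  -- now the concrete evaluation
  set E : ℂ := ∑ m : Fin L, Complex.exp (-2 * Real.pi * Complex.I * (m : ℕ) * ν * T) with hE
  have f1 : ∀ n : Fin L, ψf n n
      = Complex.exp (-2 * Real.pi * Complex.I * ((n : ℕ) : ℂ) * ν * T) * ψ (τ, ν) := by
    intro n
    show psiNM ψ T τ ν n n = _
    unfold psiNM
    rw [sub_self, zero_mul, add_zero]
  have hA : (∑ n : Fin L, ψf n n) = E * ψ (τ, ν) := by
    rw [Finset.sum_congr rfl (fun n _ => f1 n), ← Finset.sum_mul]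
  have habsf : ∀ n m : Fin L, ‖ψf n m‖
      = ‖ψ (τ + (((m:ℕ):ℝ) - ((n:ℕ):ℝ)) * T, ν)‖ := by
    intro n m
    show ‖psiNM ψ T τ ν n m‖ = _
    unfold psiNM
    rw [norm_mul, abs_exp_unit τ, one_mul]
  set F : ℤ → ℝ := fun k => (‖ψ (τ + (k:ℝ) * T, ν)‖) ^ 2 with hF
  set r0 : ℝ := (‖ψ (τ, ν)‖) ^ 2 with hr0
  -- the three complex pieces as reals
  have p1 : ((∑ n : Fin L, ψf n n) * (starRingEnd ℂ) (∑ n : Fin L, ψf n n))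
      = (((‖E‖)^2 * r0 : ℝ) : ℂ) := by
    rw [hA, Complex.mul_conj, Complex.normSq_eq_norm_sq, norm_mul, hr0]
    push_cast
    ring
  have p2 : (∑ n : Fin L, ∑ m : Fin L, ψf n m * (starRingEnd ℂ) (ψf n m))
      = (((∑ n : Fin L, ∑ m : Fin L, F (((m:ℕ):ℤ) - ((n:ℕ):ℤ))) : ℝ) : ℂ) := by
    push_cast
    apply Finset.sum_congr rfl; intro n _
    apply Finset.sum_congr rfl; intro m _
    rw [Complex.mul_conj, Complex.normSq_eq_norm_sq, habsf n m]
    norm_num [hF]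
  have p3 : (∑ n : Fin L, ψf n n * (starRingEnd ℂ) (ψf n n)) = (((L : ℝ) * r0 : ℝ) : ℂ) := by
    have e : ∀ n : Fin L, ψf n n * (starRingEnd ℂ) (ψf n n) = ((r0 : ℝ) : ℂ) := by
      intro n
      rw [Complex.mul_conj, Complex.normSq_eq_norm_sq, habsf n n]
      norm_num [hr0]
    rw [Finset.sum_congr rfl (fun n _ => e n), Finset.sum_const, Finset.card_univ,
      Fintype.card_fin, nsmul_eq_mul]
    push_cast
    ring
  rw [p1, p2, p3]
  have hre : ((((‖E‖)^2 * r0 : ℝ) : ℂ)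
      + (((∑ n : Fin L, ∑ m : Fin L, F (((m:ℕ):ℤ) - ((n:ℕ):ℤ))) : ℝ) : ℂ)
      + ((μ₄ : ℂ) - 2) * (((L : ℝ) * r0 : ℝ) : ℂ)).re
      = (‖E‖)^2 * r0 + (∑ n : Fin L, ∑ m : Fin L, F (((m:ℕ):ℤ) - ((n:ℕ):ℤ)))
        + (μ₄ - 2) * ((L : ℝ) * r0) := by
    have : ((μ₄ : ℂ) - 2) = (((μ₄ - 2 : ℝ)) : ℂ) := by push_cast; ring
    rw [this, ← Complex.ofReal_mul, ← Complex.ofReal_add, ← Complex.ofReal_add,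
      Complex.ofReal_re]
  rw [hre, sum_shift F]
  -- final bookkeeping with the k = 0 term
  have h0mem : (0:ℤ) ∈ Finset.Ioo (-(L:ℤ)) (L:ℤ) := by
    simp only [Finset.mem_Ioo]
    omega
  have hF0 : F 0 = r0 := by
    simp [hF, hr0]
  rw [← Finset.add_sum_erase _ (fun k : ℤ => ((L:ℝ) - |(k:ℝ)|) * F k) h0mem,
    ← Finset.add_sum_erase _ (fun k : ℤ => alphaCoef L μ₄ T ν k * F k) h0mem]
  have halpha0 : alphaCoef L μ₄ T ν 0
      = (L:ℝ) * (μ₄ - 1) + (‖E‖) ^ 2 := by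
    unfold alphaCoef
    rw [if_pos rfl]
  have herase : ∀ k ∈ (Finset.Ioo (-(L:ℤ)) (L:ℤ)).erase 0,
      alphaCoef L μ₄ T ν k * F k = ((L:ℝ) - |(k:ℝ)|) * F k := by
    intro k hk
    have hk0 : k ≠ 0 := (Finset.mem_erase.1 hk).1
    unfold alphaCoef
    rw [if_neg hk0]
  rw [Finset.sum_congr rfl herase, halpha0, hF0]
  simp only [Int.cast_zero, abs_zero, mul_zero, sub_zero]
  push_cast
  ring

end Master

/-- The expected integrated sidelobe level over the delay–Doppler region of interest `Θ`
equals the integrated weighted squared pulse ambiguity: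
`E[∬_Θ |χ(τ,ν)|² dτ dν] = Σ_{|n|<L} ∬_Θ α_n(ν)·|ψ(τ + nT, ν)|² dτ dν`. -/
theorem expected_ISL_closed_form
    {Ω : Type*} [MeasureSpace Ω] [IsProbabilityMeasure (ℙ : Measure Ω)]
    (L : ℕ) (hL : 1 ≤ L) (T : ℝ) (hT : 0 < T)
    (ψ : ℝ × ℝ → ℂ) (hψ : Measurable ψ)
    (s : Fin L → Ω → ℂ) (μ₄ : ℝ) (hμ₄ : 1 ≤ μ₄)
    (Θ : Set (ℝ × ℝ)) (hΘ : MeasurableSet Θ)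
    (hint : Integrable
      (fun q : (ℝ × ℝ) × Ω => ‖chi L ψ T q.1.1 q.1.2 s q.2‖ ^ 2)
      (((volume : Measure (ℝ × ℝ)).restrict Θ).prod ℙ))
    (hmeas : ∀ n : Fin L, Measurable (s n))
    (hindep : iIndepFun s ℙ)
    (hmean : ∀ n : Fin L, ∫ ω, s n ω ∂ℙ = 0)
    (hpseudo : ∀ n : Fin L, ∫ ω, (s n ω) ^ 2 ∂ℙ = 0)
    (hE2 : ∀ n : Fin L, ∫ ω, ‖s n ω‖ ^ 2 ∂ℙ = 1)
    (hmom4 : ∀ n : Fin L, Integrable (fun ω => ‖s n ω‖ ^ 4) ℙ)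
    (hE4 : ∀ n : Fin L, ∫ ω, ‖s n ω‖ ^ 4 ∂ℙ = μ₄) :
    (∫ ω, (∫ p in Θ, ‖chi L ψ T p.1 p.2 s ω‖ ^ 2) ∂ℙ)
      = ∑ n ∈ Finset.Ioo (-(L : ℤ)) (L : ℤ),
          ∫ p in Θ, alphaCoef L μ₄ T p.2 n * ‖ψ (p.1 + n * T, p.2)‖ ^ 2 := by
  classical
  -- Fubini swap
  have hswap : (∫ ω, (∫ p in Θ, (‖chi L ψ T p.1 p.2 s ω‖) ^ 2) ∂ℙ)
      = ∫ p in Θ, (∫ ω, (‖chi L ψ T p.1 p.2 s ω‖) ^ 2 ∂ℙ) := by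
    exact (MeasureTheory.integral_integral_swap hint).symm
  rw [hswap]
  -- pointwise evaluation of the inner expectation
  have hpt : ∀ p : ℝ × ℝ, (∫ ω, (‖chi L ψ T p.1 p.2 s ω‖) ^ 2 ∂ℙ)
      = ∑ k ∈ Finset.Ioo (-(L:ℤ)) (L:ℤ),
          alphaCoef L μ₄ T p.2 k * (‖ψ (p.1 + (k:ℝ) * T, p.2)‖) ^ 2 := by
    intro p
    exact master_pointwise hL T ψ s μ₄ hmeas hindep hmean hpseudo hE2 hmom4 hE4 p.1 p.2
  rw [setIntegral_congr_fun hΘ (fun p _ => hpt p)]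
  -- integrability of the summed function over Θ
  have hGint : IntegrableOn (fun p : ℝ × ℝ => ∑ k ∈ Finset.Ioo (-(L:ℤ)) (L:ℤ),
      alphaCoef L μ₄ T p.2 k * (‖ψ (p.1 + (k:ℝ) * T, p.2)‖) ^ 2) Θ volume := by
    have h1 : Integrable (fun p : ℝ × ℝ => ∫ ω, (‖chi L ψ T p.1 p.2 s ω‖) ^ 2 ∂ℙ)
        ((volume : Measure (ℝ × ℝ)).restrict Θ) := hint.integral_prod_left
    exact h1.congr (Filter.Eventually.of_forall (fun p => hpt p))
  -- nonnegativity of the coefficients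
  have halpha_nonneg : ∀ (ν : ℝ) (k : ℤ), k ∈ Finset.Ioo (-(L:ℤ)) (L:ℤ) →
      0 ≤ alphaCoef L μ₄ T ν k := by
    intro ν k hk
    simp only [Finset.mem_Ioo] at hk
    unfold alphaCoef
    by_cases h : k = 0
    · rw [if_pos h]
      have h1 : (0:ℝ) ≤ (L:ℝ) * (μ₄ - 1) := by
        apply mul_nonneg (by positivity)
        linarith
      positivity
    · rw [if_neg h]
      have habs : |k| < (L:ℤ) := abs_lt.2 ⟨hk.1, hk.2⟩
      have : |(k:ℝ)| < (L:ℝ) := by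
        rw [← Int.cast_abs]
        exact_mod_cast habs
      linarith
  -- measurability of each summand
  have hmeasA : ∀ k : ℤ, Measurable (fun p : ℝ × ℝ => alphaCoef L μ₄ T p.2 k) := by
    intro k
    by_cases h : k = 0
    · simp only [alphaCoef, if_pos h]
      apply Measurable.add measurable_const
      apply Measurable.pow_const
      have hc : Continuous fun ν : ℝ =>
          ‖∑ m : Fin L, Complex.exp (-2 * Real.pi * Complex.I * (m:ℕ) * ν * T)‖ := by
        apply continuous_norm.comp
        apply continuous_finset_sum
        intro m _
        apply Complex.continuous_exp.comp
        have e : (fun ν : ℝ => -2 * (Real.pi:ℂ) * Complex.I * ((m:ℕ):ℂ) * (ν:ℂ) * (T:ℂ))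
            = fun ν : ℝ => (-2 * (Real.pi:ℂ) * Complex.I * ((m:ℕ):ℂ)) * (ν:ℂ) * (T:ℂ) := by
          funext ν; ring
        rw [e]
        exact (continuous_const.mul Complex.continuous_ofReal).mul continuous_const
      exact hc.measurable.comp measurable_snd
    · simp only [alphaCoef, if_neg h]
      exact measurable_const
  have hmeasB : ∀ k : ℤ, Measurable (fun p : ℝ × ℝ =>
      (‖ψ (p.1 + (k:ℝ) * T, p.2)‖) ^ 2) := by
    intro k
    have hmove : Measurable (fun p : ℝ × ℝ => (p.1 + (k:ℝ) * T, p.2)) :=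
      (measurable_fst.add_const _).prodMk measurable_snd
    exact (continuous_norm.measurable.comp (hψ.comp hmove)).pow_const 2
  -- each summand is nonneg and dominated by the full sum
  have hterm_nonneg : ∀ (k : ℤ), k ∈ Finset.Ioo (-(L:ℤ)) (L:ℤ) → ∀ p : ℝ × ℝ,
      0 ≤ alphaCoef L μ₄ T p.2 k * (‖ψ (p.1 + (k:ℝ) * T, p.2)‖) ^ 2 := by
    intro k hk p
    exact mul_nonneg (halpha_nonneg p.2 k hk) (by positivity)
  have hsummand_int : ∀ (k : ℤ), k ∈ Finset.Ioo (-(L:ℤ)) (L:ℤ) →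
      IntegrableOn (fun p : ℝ × ℝ =>
        alphaCoef L μ₄ T p.2 k * (‖ψ (p.1 + (k:ℝ) * T, p.2)‖) ^ 2) Θ volume := by
    intro k hk
    apply Integrable.mono hGint ((hmeasA k).mul (hmeasB k)).aestronglyMeasurable
    apply Filter.Eventually.of_forall
    intro p
    have h1 : 0 ≤ alphaCoef L μ₄ T p.2 k * (‖ψ (p.1 + (k:ℝ) * T, p.2)‖) ^ 2 :=
      hterm_nonneg k hk p
    have h2 : alphaCoef L μ₄ T p.2 k * (‖ψ (p.1 + (k:ℝ) * T, p.2)‖) ^ 2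
        ≤ ∑ j ∈ Finset.Ioo (-(L:ℤ)) (L:ℤ),
            alphaCoef L μ₄ T p.2 j * (‖ψ (p.1 + (j:ℝ) * T, p.2)‖) ^ 2 :=
      Finset.single_le_sum (fun j hj => hterm_nonneg j hj p) hk
    have h3 : (0:ℝ) ≤ ∑ j ∈ Finset.Ioo (-(L:ℤ)) (L:ℤ),
        alphaCoef L μ₄ T p.2 j * (‖ψ (p.1 + (j:ℝ) * T, p.2)‖) ^ 2 :=
      Finset.sum_nonneg (fun j hj => hterm_nonneg j hj p)
    rw [Real.norm_eq_abs, Real.norm_eq_abs, Pi.mul_apply, _root_.abs_of_nonneg h1, _root_.abs_of_nonneg h3]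
    exact h2
  exact MeasureTheory.integral_finset_sum _ hsummand_int
end
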